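/- With $\alpha > 0$ and the recursion $K_0(u)=u$, $K_\ell(u) = K_{\ell-1}(u)+\alpha^2(1+\alpha^2)^{\ell-1}\kappa_1\left(\frac{K_{\ell-1}(u)}{(1+\alpha^2)^{\ell-1}}\right)$, the expansion $K_\ell(1-t) = (1+\alpha^2)^\ell(1-t) + o(t)$ holds as $t \to 0^+$, for every $\ell \ge 0$. -/

import Mathlib

open Real Asymptotics

noncomputable def kappa1 (u : ℝ) : ℝ := (u * (π - Real.arccos u) + Real.sqrt (1 - u ^ 2)) / π

lemma kappa1_hasDerivAt {x : ℝ} (hx1 : -1 < x) (hx2 : x < 1) :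
    HasDerivAt kappa1 (1 - Real.arccos x / π) x := by
  have hsq : (0:ℝ) < 1 - x ^ 2 := by nlinarith
  have hs : Real.sqrt (1 - x ^ 2) ≠ 0 := by positivity
  have harc : HasDerivAt Real.arccos (-(1 / Real.sqrt (1 - x ^ 2))) x :=
    Real.hasDerivAt_arccos (by linarith) (by linarith)
  have h1 : HasDerivAt (fun y : ℝ => y * (π - Real.arccos y))
      (1 * (π - Real.arccos x) + x * (0 - -(1 / Real.sqrt (1 - x ^ 2)))) x :=
    (hasDerivAt_id x).mul ((hasDerivAt_const x π).sub harc)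
  have h2 : HasDerivAt (fun y : ℝ => 1 - y ^ 2) (0 - 2 * x ^ 1) x :=
    (hasDerivAt_const x 1).sub (hasDerivAt_pow 2 x)
  have h3 : HasDerivAt (fun y : ℝ => Real.sqrt (1 - y ^ 2))
      (1 / (2 * Real.sqrt (1 - x ^ 2)) * (0 - 2 * x ^ 1)) x :=
    (Real.hasDerivAt_sqrt (ne_of_gt hsq)).comp x h2
  have h4 := (h1.add h3).div_const π
  refine HasDerivAt.congr_deriv (f := kappa1) h4 ?_
  have hπ : (π:ℝ) ≠ 0 := Real.pi_ne_zero
  field_simp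
  ring

lemma kappa1_one : kappa1 1 = 1 := by
  simp [kappa1, Real.arccos_one, Real.pi_ne_zero]

lemma continuous_kappa1 : Continuous kappa1 := by
  unfold kappa1
  apply Continuous.div_const
  exact (continuous_id.mul (continuous_const.sub Real.continuous_arccos)).add
    ((continuous_const.sub (continuous_pow 2)).sqrt)

lemma arccos_antitone : Antitone Real.arccos := by
  intro a b hab
  unfold Real.arccos
  have := Real.monotone_arcsin hab
  linarith

lemma kappa1_sub_bound {u : ℝ} (h0 : 0 ≤ u) (h1 : u < 1) :
    0 ≤ kappa1 u - u ∧ kappa1 u - u ≤ Real.arccos u / π * (1 - u) := by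
  obtain ⟨c, hc, hceq⟩ := exists_hasDerivAt_eq_slope kappa1
    (fun x => 1 - Real.arccos x / π) h1
    (continuous_kappa1.continuousOn)
    (fun x hx => kappa1_hasDerivAt (by linarith [hx.1]) hx.2)
  rw [kappa1_one] at hceq
  have h1u : (0:ℝ) < 1 - u := by linarith
  have hceq' : 1 - kappa1 u = (1 - Real.arccos c / π) * (1 - u) := by
    rw [eq_comm, div_eq_iff (ne_of_gt h1u)] at hceq
    linarith [hceq]
  have hk : kappa1 u - u = Real.arccos c / π * (1 - u) := by
    linear_combination -hceq'
  rw [hk]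
  have hcnn : 0 ≤ Real.arccos c := Real.arccos_nonneg c
  have hmono : Real.arccos c ≤ Real.arccos u := arccos_antitone hc.1.le
  constructor
  · positivity
  · have hπ := Real.pi_pos
    have : Real.arccos c / π ≤ Real.arccos u / π := by gcongr
    exact mul_le_mul_of_nonneg_right this h1u.le

lemma kappa1_littleO {f : ℝ → ℝ}
    (h : (fun t : ℝ => f t - (1 - t)) =o[nhdsWithin 0 (Set.Ioi 0)] (fun t : ℝ => t)) :
    (fun t : ℝ => kappa1 (f t) - f t) =o[nhdsWithin 0 (Set.Ioi 0)] (fun t : ℝ => t) := by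
  have ht0 : Filter.Tendsto (fun t : ℝ => t) (nhdsWithin 0 (Set.Ioi 0)) (nhds 0) :=
    Filter.Tendsto.mono_left Filter.tendsto_id nhdsWithin_le_nhds
  have hf1 : Filter.Tendsto f (nhdsWithin 0 (Set.Ioi 0)) (nhds 1) := by
    have h1 : Filter.Tendsto (fun t : ℝ => (1 : ℝ) - t) (nhdsWithin 0 (Set.Ioi 0)) (nhds 1) := by
      simpa using (tendsto_const_nhds.sub ht0)
    have h2 : Filter.Tendsto (fun t : ℝ => f t - (1 - t)) (nhdsWithin 0 (Set.Ioi 0)) (nhds 0) :=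
      h.trans_tendsto ht0
    simpa using h2.add h1
  rw [isLittleO_iff]
  intro ε hε
  have harc : Filter.Tendsto (fun t : ℝ => Real.arccos (f t) / π)
      (nhdsWithin 0 (Set.Ioi 0)) (nhds 0) := by
    have : Filter.Tendsto (fun t : ℝ => Real.arccos (f t)) (nhdsWithin 0 (Set.Ioi 0))
        (nhds (Real.arccos 1)) := (Real.continuous_arccos.tendsto 1).comp hf1
    rw [Real.arccos_one] at this
    simpa using this.div_const π
  have hev1 : ∀ᶠ t in nhdsWithin 0 (Set.Ioi 0), Real.arccos (f t) / π < ε / 2 := by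
    have := harc.eventually (eventually_lt_nhds (show (0:ℝ) < ε/2 by linarith))
    simpa using this
  have hev2 : ∀ᶠ t in nhdsWithin 0 (Set.Ioi 0), |f t - (1 - t)| ≤ (1/2) * |t| := by
    have := isLittleO_iff.mp h (show (0:ℝ) < 1/2 by norm_num)
    simpa [Real.norm_eq_abs] using this
  have hev3 : ∀ᶠ t in nhdsWithin 0 (Set.Ioi 0), t ∈ Set.Ioo (0:ℝ) (1/2) := by
    have : Set.Ioo (0:ℝ) (1/2) ∈ nhdsWithin 0 (Set.Ioi 0) := by
      apply mem_nhdsWithin.mpr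
      exact ⟨Set.Iio (1/2), isOpen_Iio, by norm_num, by
        intro x hx; exact ⟨hx.2, hx.1⟩⟩
    exact this
  filter_upwards [hev1, hev2, hev3] with t h1 h2 h3
  have ht : 0 < t := h3.1
  have htabs : |t| = t := abs_of_pos ht
  rw [htabs] at h2
  have hfu : f t ≤ 1 - t / 2 := by
    have := abs_le.mp h2
    linarith [this.2]
  have hfl : 1 - 3 * t / 2 ≤ f t := by
    have := abs_le.mp h2
    linarith [this.1]
  have hf0 : 0 ≤ f t := by linarith [h3.2]
  have hf1' : f t < 1 := by linarith
  obtain ⟨hb1, hb2⟩ := kappa1_sub_bound hf0 hf1'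
  have harcnn : 0 ≤ Real.arccos (f t) / π := div_nonneg (Real.arccos_nonneg _) Real.pi_pos.le
  have hle : kappa1 (f t) - f t ≤ (ε / 2) * (3 * t / 2) := by
    calc kappa1 (f t) - f t ≤ Real.arccos (f t) / π * (1 - f t) := hb2
      _ ≤ (ε / 2) * (3 * t / 2) := by
          apply mul_le_mul h1.le (by linarith) (by linarith) (by linarith)
  rw [Real.norm_eq_abs, Real.norm_eq_abs, abs_of_nonneg hb1, htabs]
  nlinarith

theorem K_ell_expansion_near_one (α : ℝ) (hα : 0 < α)
    (K : ℕ → ℝ → ℝ)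
    (hK0 : ∀ u, K 0 u = u)
    (hKrec : ∀ ℓ u, K (ℓ + 1) u =
      K ℓ u + α ^ 2 * (1 + α ^ 2) ^ ℓ * kappa1 (K ℓ u / (1 + α ^ 2) ^ ℓ)) :
    ∀ ℓ : ℕ, (fun t : ℝ => K ℓ (1 - t) - (1 + α ^ 2) ^ ℓ * (1 - t))
      =o[nhdsWithin 0 (Set.Ioi 0)] (fun t : ℝ => t) := by
  intro ℓ
  induction ℓ with
  | zero =>
    simp only [hK0, pow_zero, one_mul, sub_self]
    exact isLittleO_zero _ _
  | succ n ih =>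
    have hP : (0:ℝ) < (1 + α ^ 2) ^ n := by positivity
    set P : ℝ := (1 + α ^ 2) ^ n with hPdef
    set f : ℝ → ℝ := fun t => K n (1 - t) / P with hfdef
    have hf : (fun t : ℝ => f t - (1 - t)) =o[nhdsWithin 0 (Set.Ioi 0)] (fun t : ℝ => t) := by
      have := ih.const_mul_left (1 / P)
      refine this.congr_left fun t => ?_
      field_simp [hfdef]
      simp only [hfdef]
      field_simp
    have hk := kappa1_littleO hf
    have hsum := (ih.add (hk.const_mul_left (α ^ 2 * P))).add
      (hf.const_mul_left (α ^ 2 * P))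
    refine hsum.congr_left fun t => ?_
    simp only [hfdef]
    rw [hKrec n (1 - t)]
    have : (1 + α ^ 2) ^ (n + 1) = P + α ^ 2 * P := by
      rw [hPdef, pow_succ]; ring
    rw [this]
    ring
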